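/- (Theorem 3.1, equivalence of the LP approximation problems.) Let y^t be a flow vector with all components nonnegative, set α^t_{ℓk} = q_{ℓk}(y^t), and let σ_{ℓjk} and τ_{ℓjk} be the DR and Taylor linearizations at y^t (defined in the context). Then a flow vector y satisfies the DR output-quality constraints ∑_{i∈I} λ_{ik} yIJ_{ij} + ∑_{ℓ∈L} σ_{ℓjk}(y) ≥ λmin_{jk} · (∑_{i∈I} yIJ_{ij} + ∑_{ℓ∈L} yLJ_{ℓj}) and ∑_{i∈I} λ_{ik} yIJ_{ij} + ∑_{ℓ∈L} σ_{ℓjk}(y) ≤ λmax_{jk} · (∑_{i∈I} yIJ_{ij} + ∑_{ℓ∈L} yLJ_{ℓj}) for all j ∈ J, k ∈ K if and only if y satisfies the same constraints with σ_{ℓjk}(y) replaced by τ_{ℓjk}(y). Consequently, the set of flow vectors satisfying the base linear constraints together with the σ-constraints equals the set of flow vectors satisfying the base linear constraints together with the τ-constraints, and the supremum of the objective ∑_{(i,ℓ)} w^{IL}_{iℓ} yIL_{iℓ} + ∑_{(i,j)} w^{IJ}_{ij} yIJ_{ij} + ∑_{(ℓ,j)} w^{LJ}_{ℓj} yLJ_{ℓj}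 over the two sets coincides. -/

import Mathlib

open scoped BigOperators

/-- A flow vector on the complete tripartite pooling network. -/
abbrev FlowVec (I L J : Type*) : Type _ :=
  (I → L → ℝ) × (I → J → ℝ) × (L → J → ℝ)

/-- The pool quality `q_{ℓk}(y)`. -/
noncomputable def poolQuality {I L J K : Type*} [Fintype I] [Fintype J]
    (lam : I → K → ℝ) (ℓ : L) (k : K) (y : FlowVec I L J) : ℝ :=
  if 0 < ∑ j, y.2.2 ℓ j then (∑ i, lam i k * y.1 i ℓ) / (∑ j, y.2.2 ℓ j) else 0

/-- The base linear constraints of the pooling problem: flow conservation at pools,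
node capacities, and arc bounds. -/
def baseCons {I L J : Type*} [Fintype I] [Fintype L] [Fintype J]
    (uI : I → ℝ) (uL : L → ℝ) (uJ : J → ℝ)
    (uIL : I → L → ℝ) (uIJ : I → J → ℝ) (uLJ : L → J → ℝ)
    (y : FlowVec I L J) : Prop :=
  (∀ ℓ, ∑ i, y.1 i ℓ = ∑ j, y.2.2 ℓ j) ∧
  (∀ i, (∑ ℓ, y.1 i ℓ) + (∑ j, y.2.1 i j) ≤ uI i) ∧
  (∀ ℓ, (∑ j, y.2.2 ℓ j) ≤ uL ℓ) ∧
  (∀ j, (∑ i, y.2.1 i j) + (∑ ℓ, y.2.2 ℓ j) ≤ uJ j) ∧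
  (∀ i ℓ, 0 ≤ y.1 i ℓ ∧ y.1 i ℓ ≤ uIL i ℓ) ∧
  (∀ i j, 0 ≤ y.2.1 i j ∧ y.2.1 i j ≤ uIJ i j) ∧
  (∀ ℓ j, 0 ≤ y.2.2 ℓ j ∧ y.2.2 ℓ j ≤ uLJ ℓ j)

/-- The DR linearization `σ_{ℓjk}` at the base point `y^t` with pool quality estimates `α^t`. -/
noncomputable def drLin {I L J K : Type*} [Fintype I] [Fintype J]
    (lam : I → K → ℝ) (αt : L → K → ℝ) (yt : FlowVec I L J)
    (ℓ : L) (j : J) (k : K) (y : FlowVec I L J) : ℝ :=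
  if 0 < ∑ r, yt.2.2 ℓ r then
    αt ℓ k * y.2.2 ℓ j + (yt.2.2 ℓ j / ∑ r, yt.2.2 ℓ r)
      * ((∑ i, lam i k * y.1 i ℓ) - αt ℓ k * ∑ r, y.2.2 ℓ r)
  else 0

/-- The Taylor linearization `τ_{ℓjk}` of `y ↦ q_{ℓk}(y)·yLJ_{ℓj}` at the base point `y^t`. -/
noncomputable def taylorLin {I L J K : Type*} [Fintype I] [Fintype L] [Fintype J]
    (lam : I → K → ℝ) (yt : FlowVec I L J)
    (ℓ : L) (j : J) (k : K) (y : FlowVec I L J) : ℝ :=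
  if 0 < ∑ r, yt.2.2 ℓ r then
    poolQuality lam ℓ k yt * yt.2.2 ℓ j
      + fderiv ℝ (fun z : FlowVec I L J => poolQuality lam ℓ k z * z.2.2 ℓ j) yt (y - yt)
  else 0


section Aux

open ContinuousLinearMap

variable {I L J K : Type*} [Fintype I] [Fintype L] [Fintype J]

noncomputable def NcCLM (lam : I → K → ℝ) (ℓ : L) (k : K) : FlowVec I L J →L[ℝ] ℝ :=
  ∑ i, lam i k • ((proj ℓ).comp ((proj i).comp
    (fst ℝ (I → L → ℝ) ((I → J → ℝ) × (L → J → ℝ)))))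

noncomputable def PcCLM (ℓ : L) (j : J) : FlowVec I L J →L[ℝ] ℝ :=
  (proj j).comp ((proj ℓ).comp ((snd ℝ (I → J → ℝ) (L → J → ℝ)).comp
    (snd ℝ (I → L → ℝ) ((I → J → ℝ) × (L → J → ℝ)))))

noncomputable def DcCLM (ℓ : L) : FlowVec I L J →L[ℝ] ℝ := ∑ r, PcCLM ℓ r

@[simp] lemma NcCLM_apply (lam : I → K → ℝ) (ℓ : L) (k : K) (z : FlowVec I L J) :
    NcCLM lam ℓ k z = ∑ i, lam i k * z.1 i ℓ := by
  simp [NcCLM, ContinuousLinearMap.sum_apply]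

@[simp] lemma PcCLM_apply (ℓ : L) (j : J) (z : FlowVec I L J) :
    PcCLM (I := I) ℓ j z = z.2.2 ℓ j := by
  simp [PcCLM]

@[simp] lemma DcCLM_apply (ℓ : L) (z : FlowVec I L J) :
    DcCLM (I := I) (J := J) ℓ z = ∑ r, z.2.2 ℓ r := by
  simp [DcCLM, ContinuousLinearMap.sum_apply]

lemma dr_eq_taylor (lam : I → K → ℝ) (yt : FlowVec I L J) (αt : L → K → ℝ)
    (hαt : ∀ ℓ k, αt ℓ k = poolQuality lam ℓ k yt)
    (ℓ : L) (j : J) (k : K) (y : FlowVec I L J) :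
    drLin lam αt yt ℓ j k y = taylorLin lam yt ℓ j k y := by
  by_cases hS : 0 < ∑ r, yt.2.2 ℓ r
  · have hSne : (∑ r, yt.2.2 ℓ r) ≠ 0 := ne_of_gt hS
    have hN : HasFDerivAt (fun z : FlowVec I L J => ∑ i, lam i k * z.1 i ℓ)
        (NcCLM lam ℓ k) yt := by
      have h := (NcCLM (I := I) (L := L) (J := J) lam ℓ k).hasFDerivAt (x := yt)
      simpa only [show ⇑(NcCLM (I := I) (L := L) (J := J) lam ℓ k)
        = fun z : FlowVec I L J => ∑ i, lam i k * z.1 i ℓ from funext fun z =>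
          NcCLM_apply lam ℓ k z] using h
    have hD : HasFDerivAt (fun z : FlowVec I L J => ∑ r, z.2.2 ℓ r)
        (DcCLM (I := I) (J := J) ℓ) yt := by
      have h := (DcCLM (I := I) (L := L) (J := J) ℓ).hasFDerivAt (x := yt)
      simpa only [show ⇑(DcCLM (I := I) (L := L) (J := J) ℓ)
        = fun z : FlowVec I L J => ∑ r, z.2.2 ℓ r from funext fun z =>
          DcCLM_apply ℓ z] using h
    have hP : HasFDerivAt (fun z : FlowVec I L J => z.2.2 ℓ j)
        (PcCLM (I := I) ℓ j) yt := by
      have h := (PcCLM (I := I) (L := L) (J := J) ℓ j).hasFDerivAt (x := yt)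
      simpa only [show ⇑(PcCLM (I := I) (L := L) (J := J) ℓ j)
        = fun z : FlowVec I L J => z.2.2 ℓ j from funext fun z =>
          PcCLM_apply ℓ j z] using h
    have hinv : HasFDerivAt (fun z : FlowVec I L J => (∑ r, z.2.2 ℓ r)⁻¹)
        (((1 : ℝ →L[ℝ] ℝ).smulRight (-((∑ r, yt.2.2 ℓ r) ^ 2)⁻¹)).comp
          (DcCLM (I := I) (J := J) ℓ)) yt :=
      (hasFDerivAt_inv hSne).comp yt hD
    have hg := (hN.mul hinv).mul hP
    have heq : (fun z : FlowVec I L J => poolQuality lam ℓ k z * z.2.2 ℓ j)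
        =ᶠ[nhds yt] (fun z : FlowVec I L J =>
          (∑ i, lam i k * z.1 i ℓ) * (∑ r, z.2.2 ℓ r)⁻¹ * z.2.2 ℓ j) := by
      have hc : ContinuousAt (fun z : FlowVec I L J => ∑ r, z.2.2 ℓ r) yt :=
        hD.differentiableAt.continuousAt
      filter_upwards [hc.eventually (eventually_gt_nhds hS)] with z hz
      simp [poolQuality, hz, div_eq_mul_inv]
    rw [drLin, if_pos hS, taylorLin, if_pos hS, heq.fderiv_eq, (show HasFDerivAt (fun z : FlowVec I L J =>
      (∑ i, lam i k * z.1 i ℓ) * (∑ r, z.2.2 ℓ r)⁻¹ * z.2.2 ℓ j) _ yt from hg).fderiv]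
    rw [hαt, poolQuality, if_pos hS]
    simp only [ContinuousLinearMap.add_apply, ContinuousLinearMap.smul_apply,
      ContinuousLinearMap.comp_apply, ContinuousLinearMap.smulRight_apply,
      ContinuousLinearMap.one_apply, NcCLM_apply, PcCLM_apply, DcCLM_apply,
      Prod.snd_sub, Prod.fst_sub, Pi.sub_apply, smul_eq_mul, Pi.mul_apply]
    simp only [mul_sub, Finset.sum_sub_distrib]
    field_simp
    ring
  · simp [drLin, taylorLin, hS]

end Aux

/-- Theorem 3.1, equivalence of the LP approximation problems:
the DR output-quality constraints and the Taylor output-quality constraints at `y^t`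
are satisfied by exactly the same flow vectors; consequently the feasible regions of
the two LP approximation problems coincide, and the suprema of the linear objective
over the two feasible regions coincide. -/
theorem dr_slpF_subproblems_equivalent
    {I L J K : Type*} [Fintype I] [Fintype L] [Fintype J]
    [Nonempty I] [Nonempty L] [Nonempty J] [Nonempty K]
    (lam : I → K → ℝ) (lamin lamax : J → K → ℝ)
    (uI : I → ℝ) (uL : L → ℝ) (uJ : J → ℝ)
    (uIL : I → L → ℝ) (uIJ : I → J → ℝ) (uLJ : L → J → ℝ)
    (wIL : I → L → ℝ) (wIJ : I → J → ℝ) (wLJ : L → J → ℝ)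
    (yt : FlowVec I L J)
    (hyt1 : ∀ i ℓ, 0 ≤ yt.1 i ℓ) (hyt2 : ∀ i j, 0 ≤ yt.2.1 i j)
    (hyt3 : ∀ ℓ j, 0 ≤ yt.2.2 ℓ j)
    (αt : L → K → ℝ) (hαt : ∀ ℓ k, αt ℓ k = poolQuality lam ℓ k yt)
    (σcons τcons : FlowVec I L J → Prop)
    (hσ : ∀ y, σcons y ↔ ∀ (j : J) (k : K),
        lamin j k * ((∑ i, y.2.1 i j) + ∑ ℓ, y.2.2 ℓ j)
          ≤ (∑ i, lam i k * y.2.1 i j) + ∑ ℓ, drLin lam αt yt ℓ j k y ∧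
        (∑ i, lam i k * y.2.1 i j) + (∑ ℓ, drLin lam αt yt ℓ j k y)
          ≤ lamax j k * ((∑ i, y.2.1 i j) + ∑ ℓ, y.2.2 ℓ j))
    (hτ : ∀ y, τcons y ↔ ∀ (j : J) (k : K),
        lamin j k * ((∑ i, y.2.1 i j) + ∑ ℓ, y.2.2 ℓ j)
          ≤ (∑ i, lam i k * y.2.1 i j) + ∑ ℓ, taylorLin lam yt ℓ j k y ∧
        (∑ i, lam i k * y.2.1 i j) + (∑ ℓ, taylorLin lam yt ℓ j k y)
          ≤ lamax j k * ((∑ i, y.2.1 i j) + ∑ ℓ, y.2.2 ℓ j)) :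
    (∀ y, σcons y ↔ τcons y) ∧
    {y : FlowVec I L J | baseCons uI uL uJ uIL uIJ uLJ y ∧ σcons y}
      = {y : FlowVec I L J | baseCons uI uL uJ uIL uIJ uLJ y ∧ τcons y} ∧
    sSup ((fun y : FlowVec I L J =>
          (∑ i, ∑ ℓ, wIL i ℓ * y.1 i ℓ) + (∑ i, ∑ j, wIJ i j * y.2.1 i j)
            + ∑ ℓ, ∑ j, wLJ ℓ j * y.2.2 ℓ j) ''
        {y : FlowVec I L J | baseCons uI uL uJ uIL uIJ uLJ y ∧ σcons y})
      = sSup ((fun y : FlowVec I L J =>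
          (∑ i, ∑ ℓ, wIL i ℓ * y.1 i ℓ) + (∑ i, ∑ j, wIJ i j * y.2.1 i j)
            + ∑ ℓ, ∑ j, wLJ ℓ j * y.2.2 ℓ j) ''
        {y : FlowVec I L J | baseCons uI uL uJ uIL uIJ uLJ y ∧ τcons y}) := by
  have hst : ∀ (ℓ : L) (j : J) (k : K) (y : FlowVec I L J),
      drLin lam αt yt ℓ j k y = taylorLin lam yt ℓ j k y :=
    fun ℓ j k y => dr_eq_taylor lam yt αt hαt ℓ j k y
  have hiff : ∀ y, σcons y ↔ τcons y := by
    intro y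
    rw [hσ, hτ]
    simp only [hst]
  have hset : {y : FlowVec I L J | baseCons uI uL uJ uIL uIJ uLJ y ∧ σcons y}
      = {y : FlowVec I L J | baseCons uI uL uJ uIL uIJ uLJ y ∧ τcons y} := by
    ext y
    simp only [Set.mem_setOf_eq, hiff y]
  exact ⟨hiff, hset, by rw [hset]⟩
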